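/- Let L be a {Φ∪Σ,Δ}-field, fix ∂ = ∂_j ∈ Δ and σ_i, σ_k ∈ Σ, and let B ∈ M_n(L), D ∈ GL_n(L) satisfy σ_i(B)·D = ∂(D) + D·B. If Z ∈ M_n(L) satisfies ∂(Z) = [σ_k(B), Z], then the matrix W := σ_k(D)·Z·σ_k(D)^{-1} satisfies ∂(W) = [σ_i(σ_k(B)), W]; equivalently, the matrix σ_i^{-1}(W) again satisfies ∂(σ_i^{-1}(W)) = [σ_k(B), σ_i^{-1}(W)]. -/

import Mathlib

/-- A `{Φ∪Σ,Δ}`-field structure on a field `L`: commuting automorphisms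
`φ_1,…,φ_q` and `σ_1,…,σ_r` together with derivations `∂_1,…,∂_m`, all of
which pairwise commute. -/
structure PhiSigmaDeltaField (q r m : ℕ) (L : Type*) [Field L] where
  φ : Fin q → L ≃+* L
  σ : Fin r → L ≃+* L
  der : Fin m → L → L
  der_add : ∀ i x y, der i (x + y) = der i x + der i y
  der_mul : ∀ i x y, der i (x * y) = der i x * y + x * der i y
  comm_φφ : ∀ i j x, φ i (φ j x) = φ j (φ i x)
  comm_φσ : ∀ i j x, φ i (σ j x) = σ j (φ i x)
  comm_σσ : ∀ i j x, σ i (σ j x) = σ j (σ i x)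
  comm_φder : ∀ i j x, φ i (der j x) = der j (φ i x)
  comm_σder : ∀ i j x, σ i (der j x) = der j (σ i x)
  comm_derder : ∀ i j x, der i (der j x) = der j (der i x)

section Aux

variable {n : ℕ} {L : Type*} [Field L]

/-- Derivation of finite sums. -/
lemma der_sum (d : L → L) (hadd : ∀ x y, d (x + y) = d x + d y)
    (s : Finset (Fin n)) (f : Fin n → L) :
    d (∑ x ∈ s, f x) = ∑ x ∈ s, d (f x) := by
  classical
  induction s using Finset.induction_on with
  | empty =>
      have h0 : d 0 = 0 := by have := hadd 0 0; simpa using this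
      simpa using h0
  | insert _ _ hx ih =>
      rw [Finset.sum_insert hx, Finset.sum_insert hx, hadd, ih]

/-- Leibniz rule for entrywise derivations of matrix products. -/
lemma derMap_mul (d : L → L) (hadd : ∀ x y, d (x + y) = d x + d y)
    (hmul : ∀ x y, d (x * y) = d x * y + x * d y)
    (A B : Matrix (Fin n) (Fin n) L) :
    (A * B).map d = A.map d * B + A * B.map d := by
  ext a b
  simp only [Matrix.map_apply, Matrix.add_apply, Matrix.mul_apply,
    der_sum d hadd, hmul, Finset.sum_add_distrib]

lemma derMap_one (d : L → L) (hadd : ∀ x y, d (x + y) = d x + d y)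
    (hmul : ∀ x y, d (x * y) = d x * y + x * d y) :
    (1 : Matrix (Fin n) (Fin n) L).map d = 0 := by
  have h0 : d 0 = 0 := by have := hadd 0 0; simpa using this
  have h1 : d 1 = 0 := by
    have := hmul 1 1
    simp only [one_mul, mul_one] at this
    simpa using this
  ext a b
  simp [Matrix.one_apply, apply_ite d, h0, h1]

/-- Multiplicativity of entrywise ring-equiv maps of matrices. -/
lemma equivMap_mul (f : L ≃+* L) (A B : Matrix (Fin n) (Fin n) L) :
    (A * B).map ⇑f = A.map ⇑f * B.map ⇑f := by
  ext a b
  simp [Matrix.mul_apply, map_sum]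

lemma equivMap_symm_mul (f : L ≃+* L) (A B : Matrix (Fin n) (Fin n) L) :
    (A * B).map ⇑f.symm = A.map ⇑f.symm * B.map ⇑f.symm := by
  ext a b
  simp [Matrix.mul_apply, map_sum]

lemma equivMap_symm_sub (f : L ≃+* L) (A B : Matrix (Fin n) (Fin n) L) :
    (A - B).map ⇑f.symm = A.map ⇑f.symm - B.map ⇑f.symm := by
  ext a b
  simp

/-- The key noncommutative-ring computation for conjugation. -/
lemma conj_calc {R : Type*} [Ring R] {E Ei Z B' Bi : R}
    (h1 : E * Ei = 1) (h2 : Ei * E = 1) :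
    ((Bi * E - E * B') * Z + E * (B' * Z - Z * B')) * Ei +
      E * Z * (-(Ei * (Bi * E - E * B') * Ei)) =
      Bi * (E * Z * Ei) - E * Z * Ei * Bi := by
  have h3 : Ei * (Bi * E - E * B') * Ei = Ei * Bi - B' * Ei := by
    have h4 : Ei * (Bi * E - E * B') * Ei
        = Ei * Bi * (E * Ei) - (Ei * E) * (B' * Ei) := by noncomm_ring
    rw [h4, h1, h2, mul_one, one_mul]
  rw [h3]
  noncomm_ring

end Aux

theorem statement11 {n q r m : ℕ} (hn : 1 ≤ n) {L : Type*} [Field L] [CharZero L]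
    (F : PhiSigmaDeltaField q r m L) (j : Fin m) (i k : Fin r)
    (B D : Matrix (Fin n) (Fin n) L) (hD : IsUnit D)
    (hDeq : B.map ⇑(F.σ i) * D = D.map (F.der j) + D * B)
    (Z : Matrix (Fin n) (Fin n) L)
    (hZ : Z.map (F.der j) = B.map ⇑(F.σ k) * Z - Z * B.map ⇑(F.σ k)) :
    (D.map ⇑(F.σ k) * Z * (D.map ⇑(F.σ k))⁻¹).map (F.der j) =
        (B.map ⇑(F.σ k)).map ⇑(F.σ i) *
            (D.map ⇑(F.σ k) * Z * (D.map ⇑(F.σ k))⁻¹) -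
          (D.map ⇑(F.σ k) * Z * (D.map ⇑(F.σ k))⁻¹) *
            (B.map ⇑(F.σ k)).map ⇑(F.σ i) ∧
      ((D.map ⇑(F.σ k) * Z * (D.map ⇑(F.σ k))⁻¹).map ⇑(F.σ i).symm).map (F.der j) =
        B.map ⇑(F.σ k) *
            ((D.map ⇑(F.σ k) * Z * (D.map ⇑(F.σ k))⁻¹).map ⇑(F.σ i).symm) -
          ((D.map ⇑(F.σ k) * Z * (D.map ⇑(F.σ k))⁻¹).map ⇑(F.σ i).symm) *
            B.map ⇑(F.σ k) := by
  classical
  set d : L → L := F.der j with hdDef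
  have hadd : ∀ x y, d (x + y) = d x + d y := F.der_add j
  have hmul : ∀ x y, d (x * y) = d x * y + x * d y := F.der_mul j
  set E : Matrix (Fin n) (Fin n) L := D.map ⇑(F.σ k) with hEdef
  set B' : Matrix (Fin n) (Fin n) L := B.map ⇑(F.σ k) with hB'def
  set Bi : Matrix (Fin n) (Fin n) L := B'.map ⇑(F.σ i) with hBidef
  -- E is invertible
  have hE : IsUnit E := by
    have h := hD.map ((F.σ k).toRingHom.mapMatrix)
    rw [RingHom.mapMatrix_apply] at h
    simpa [hEdef] using h
  have h1 : E * E⁻¹ = 1 :=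
    Matrix.mul_nonsing_inv E ((Matrix.isUnit_iff_isUnit_det E).mp hE)
  have h2 : E⁻¹ * E = 1 :=
    Matrix.nonsing_inv_mul E ((Matrix.isUnit_iff_isUnit_det E).mp hE)
  -- transport the defining equation through σ_k
  have hEeq : Bi * E = E.map d + E * B' := by
    have h := congrArg (fun X : Matrix (Fin n) (Fin n) L => X.map ⇑(F.σ k)) hDeq
    rw [equivMap_mul (F.σ k)] at h
    have hL : (B.map ⇑(F.σ i)).map ⇑(F.σ k) = Bi := by
      ext a b; simp [hBidef, hB'def, Matrix.map_apply, F.comm_σσ]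
    have hDd : (D.map d).map ⇑(F.σ k) = E.map d := by
      ext a b; simp [hEdef, Matrix.map_apply, hdDef, F.comm_σder]
    have hAdd : (D.map d + D * B).map ⇑(F.σ k)
        = (D.map d).map ⇑(F.σ k) + (D * B).map ⇑(F.σ k) := by
      ext a b; simp only [Matrix.map_apply, Matrix.add_apply, map_add]
    rw [hAdd, hDd, equivMap_mul (F.σ k), hL] at h
    exact h
  have hdE : E.map d = Bi * E - E * B' := eq_sub_of_add_eq hEeq.symm
  have hZd : Z.map d = B' * Z - Z * B' := hZ
  -- derivative of the inverse
  have hdEinv : E⁻¹.map d = -(E⁻¹ * E.map d * E⁻¹) := by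
    have h0 : (E * E⁻¹).map d = 0 := by rw [h1]; exact derMap_one d hadd hmul
    rw [derMap_mul d hadd hmul] at h0
    rw [add_comm] at h0
    have hEd0 : E * E⁻¹.map d = -(E.map d * E⁻¹) :=
      eq_neg_of_add_eq_zero_left h0
    calc E⁻¹.map d = E⁻¹ * (E * E⁻¹.map d) := by
            rw [← mul_assoc, h2, one_mul]
      _ = E⁻¹ * -(E.map d * E⁻¹) := by rw [hEd0]
      _ = -(E⁻¹ * E.map d * E⁻¹) := by rw [mul_neg, mul_assoc]
  -- first statement
  have part1 : (E * Z * E⁻¹).map d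
      = Bi * (E * Z * E⁻¹) - E * Z * E⁻¹ * Bi := by
    rw [derMap_mul d hadd hmul (E * Z) E⁻¹, derMap_mul d hadd hmul E Z,
      hdEinv, hdE, hZd]
    exact conj_calc h1 h2
  refine ⟨part1, ?_⟩
  -- second statement: apply σ_i⁻¹ entrywise
  have hcomm : ∀ x, d ((F.σ i).symm x) = (F.σ i).symm (d x) := by
    intro x
    have h' : (F.σ i) (d ((F.σ i).symm x)) = d x := by
      have := F.comm_σder i j ((F.σ i).symm x)
      simpa [hdDef] using this
    calc d ((F.σ i).symm x)
        = (F.σ i).symm ((F.σ i) (d ((F.σ i).symm x))) :=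
          ((F.σ i).symm_apply_apply _).symm
      _ = (F.σ i).symm (d x) := by rw [h']
  have hBiB : Bi.map ⇑(F.σ i).symm = B' := by
    ext a b; simp [hBidef, Matrix.map_apply]
  have hLHS : ((E * Z * E⁻¹).map d).map ⇑(F.σ i).symm
      = ((E * Z * E⁻¹).map ⇑(F.σ i).symm).map d := by
    ext a b; simp only [Matrix.map_apply, hcomm]
  rw [← hLHS, part1]
  ext a b
  simp [Matrix.map_apply, Matrix.mul_apply, Matrix.sub_apply, map_sub,
    map_sum, map_mul, hBidef, Finset.mul_sum, Finset.sum_mul]
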